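/- Let F be a field of characteristic different from 2, a ∈ F^× a non-square, E = F(√a), σ the nontrivial element of Gal(E/F). Then σ acts trivially on E^×/E^{×2} (i.e. σ(e)/e ∈ E^{×2} for every e ∈ E^×) if and only if either (i) −1 ∈ N_{E/F}(E^×) and N_{E/F}(E^×) ⊆ ⟨a⟩·F^{×2}, or (ii) −a ∈ F^{×2} (so that E = F(√−1)) and F is a Pythagorean field. (This is the paper's explicit characterization, for p = 2 and n = 1, of when H^1(E) is a trivial F_2[Gal(E/F)]-module.) -/

import Mathlib

namespace TrivAct

variable {F E : Type*} [Field F] [Field E] [Algebra F E]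

lemma unique_repr (a : F) (hns : ∀ f : F, f ^ 2 ≠ a)
    (α : E) (hα : α ^ 2 = algebraMap F E a) {u v : F}
    (h : algebraMap F E u + algebraMap F E v * α = 0) : u = 0 ∧ v = 0 := by
  have inj : Function.Injective (algebraMap F E) := (algebraMap F E).injective
  by_cases hv : v = 0
  · subst hv
    simp only [map_zero, zero_mul, add_zero] at h
    exact ⟨inj (by simpa using h), rfl⟩
  · exfalso
    have hv' : algebraMap F E v ≠ 0 := fun hh => hv (inj (by simpa using hh))
    have hαeq : α = -(algebraMap F E u / algebraMap F E v) := by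
      field_simp
      linear_combination h
    apply hns (u / v)
    apply inj
    rw [map_pow, map_div₀, ← hα, hαeq]
    ring

lemma exists_repr (a : F) (α : E) (hα : α ^ 2 = algebraMap F E a)
    (hgen : Algebra.adjoin F {α} = ⊤) (e : E) :
    ∃ u v : F, e = algebraMap F E u + algebraMap F E v * α := by
  let S : Subalgebra F E :=
    { carrier := {e | ∃ u v : F, e = algebraMap F E u + algebraMap F E v * α}
      add_mem' := by
        rintro x y ⟨u1, v1, rfl⟩ ⟨u2, v2, rfl⟩
        exact ⟨u1 + u2, v1 + v2, by rw [map_add, map_add]; ring⟩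
      mul_mem' := by
        rintro x y ⟨u1, v1, rfl⟩ ⟨u2, v2, rfl⟩
        refine ⟨u1 * u2 + a * v1 * v2, u1 * v2 + u2 * v1, ?_⟩
        simp only [map_add, map_mul]
        linear_combination (algebraMap F E v1 * algebraMap F E v2) * hα
      algebraMap_mem' := fun r => ⟨r, 0, by simp⟩ }
  have hS : α ∈ S := ⟨0, 1, by simp⟩
  have hle : Algebra.adjoin F {α} ≤ S := Algebra.adjoin_le (by simpa using hS)
  rw [hgen] at hle
  exact hle (by trivial)

lemma norm_formula (a : F) (hns : ∀ f : F, f ^ 2 ≠ a)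
    (α : E) (hα : α ^ 2 = algebraMap F E a)
    (hgen : Algebra.adjoin F {α} = ⊤) (u v : F) :
    Algebra.norm F (algebraMap F E u + algebraMap F E v * α) = u ^ 2 - a * v ^ 2 := by
  have li : LinearIndependent F ![(1 : E), α] := by
    rw [LinearIndependent.pair_iff]
    intro s t hst
    exact unique_repr a hns α hα (by simpa [Algebra.smul_def] using hst)
  have hsp : ⊤ ≤ Submodule.span F (Set.range ![(1 : E), α]) := by
    intro x _
    obtain ⟨p, q, rfl⟩ := exists_repr a α hα hgen x
    have hr : Set.range ![(1 : E), α] = {1, α} := by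
      simp [Matrix.range_cons, Matrix.range_empty, Set.pair_comm]
    rw [hr, Submodule.mem_span_pair]
    exact ⟨p, q, by rw [Algebra.smul_def, Algebra.smul_def, mul_one]⟩
  let b : Module.Basis (Fin 2) F E := Module.Basis.mk li hsp
  have hb0 : b 0 = 1 := by simp [b, Module.Basis.mk_apply]
  have hb1 : b 1 = α := by simp [b, Module.Basis.mk_apply]
  have key : ∀ c d : F, algebraMap F E c + algebraMap F E d * α = c • b 0 + d • b 1 := by
    intro c d
    rw [hb0, hb1, Algebra.smul_def, Algebra.smul_def, mul_one]
  have hrepr0 : ∀ c d : F, b.repr (algebraMap F E c + algebraMap F E d * α) 0 = c := by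
    intro c d
    rw [key, map_add, map_smul, map_smul, b.repr_self, b.repr_self]
    simp
  have hrepr1 : ∀ c d : F, b.repr (algebraMap F E c + algebraMap F E d * α) 1 = d := by
    intro c d
    rw [key, map_add, map_smul, map_smul, b.repr_self, b.repr_self]
    simp
  rw [Algebra.norm_eq_matrix_det b, Matrix.det_fin_two]
  have e0 : (algebraMap F E u + algebraMap F E v * α) * b 0
      = algebraMap F E u + algebraMap F E v * α := by rw [hb0, mul_one]
  have e1 : (algebraMap F E u + algebraMap F E v * α) * b 1
      = algebraMap F E (a * v) + algebraMap F E u * α := by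
    rw [hb1, map_mul]
    linear_combination algebraMap F E v * hα
  rw [Algebra.leftMulMatrix_eq_repr_mul, Algebra.leftMulMatrix_eq_repr_mul,
    Algebra.leftMulMatrix_eq_repr_mul, Algebra.leftMulMatrix_eq_repr_mul,
    e0, e1, hrepr0, hrepr1, hrepr0, hrepr1]
  ring

lemma norm_coords_nz (a : F) (hns : ∀ f : F, f ^ 2 ≠ a) {u v : F}
    (h : u ^ 2 - a * v ^ 2 = 0) : u = 0 ∧ v = 0 := by
  by_cases hv : v = 0
  · subst hv
    refine ⟨?_, rfl⟩
    exact pow_eq_zero_iff (n := 2) (by norm_num) |>.mp (by linear_combination h)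
  · exfalso
    apply hns (u / v)
    field_simp
    linear_combination h

lemma sigma_alpha (a : F) (hns : ∀ f : F, f ^ 2 ≠ a)
    (α : E) (hα : α ^ 2 = algebraMap F E a)
    (hgen : Algebra.adjoin F {α} = ⊤)
    (σ : E ≃ₐ[F] E) (hσ : σ ≠ 1) : σ α = -α := by
  have h2 : (σ α) ^ 2 = α ^ 2 := by
    rw [← map_pow, hα, AlgEquiv.commutes, ← hα]
  have hz : (σ α - α) * (σ α + α) = 0 := by linear_combination h2
  rcases mul_eq_zero.1 hz with h | h
  · exfalso
    apply hσ
    have hfix : σ α = α := by linear_combination h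
    apply AlgEquiv.ext
    intro x
    obtain ⟨u, v, rfl⟩ := exists_repr a α hα hgen x
    simp [map_add, map_mul, AlgEquiv.commutes, hfix]
  · linear_combination h

lemma mem_sq (hchar : (2 : F) ≠ 0) (a : F) (hns : ∀ f : F, f ^ 2 ≠ a)
    (α : E) (hα : α ^ 2 = algebraMap F E a)
    (hgen : Algebra.adjoin F {α} = ⊤) {f : F} (hf : f ≠ 0) {w : E}
    (h : w ^ 2 = algebraMap F E f) :
    ∃ ε : Fin 2, ∃ g : F, g ≠ 0 ∧ f = a ^ (ε : ℕ) * g ^ 2 := by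
  obtain ⟨p, q, rfl⟩ := exists_repr a α hα hgen w
  have hexp : algebraMap F E (p ^ 2 + a * q ^ 2 - f) + algebraMap F E (2 * p * q) * α = 0 := by
    rw [map_sub, map_add, map_mul, map_mul, map_pow, map_pow, map_mul, map_ofNat]
    linear_combination h - (algebraMap F E q) ^ 2 * hα
  obtain ⟨h1, h2⟩ := unique_repr a hns α hα hexp
  have hpq : p * q = 0 := by
    rcases mul_eq_zero.1 (show (2 : F) * (p * q) = 0 by linear_combination h2) with hc | hc
    · exact absurd hc hchar
    · exact hc
  rcases mul_eq_zero.1 hpq with hp | hq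
  · refine ⟨1, q, ?_, ?_⟩
    · intro hq0
      apply hf
      linear_combination -h1 + p * hp + a * q * hq0
    · simp only [Fin.val_one, pow_one]
      linear_combination -h1 + p * hp
  · refine ⟨0, p, ?_, ?_⟩
    · intro hp0
      apply hf
      linear_combination -h1 + p * hp0 + a * q * hq
    · simp only [Fin.val_zero, pow_zero, one_mul]
      linear_combination -h1 + a * q * hq

end TrivAct


/-- Let `F` be a field of characteristic different from 2, `a ∈ F^×` a
non-square, `E = F(√a)`, `σ` the nontrivial element of `Gal(E/F)`.  Then `σ` acts trivially on
`E^×/E^{×2}` if and only if either (i) `-1 ∈ N_{E/F}(E^×)` and `N_{E/F}(E^×) ⊆ ⟨a⟩·F^{×2}`, or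
(ii) `-a ∈ F^{×2}` and `F` is a Pythagorean field. -/
theorem trivial_action_iff_two
    {F E : Type*} [Field F] [Field E] [Algebra F E]
    (hchar : (2 : F) ≠ 0)
    (a : F) (ha : a ≠ 0) (hns : ∀ f : F, f ^ 2 ≠ a)
    (α : E) (hα : α ^ 2 = algebraMap F E a)
    (hgen : Algebra.adjoin F {α} = ⊤)
    (σ : E ≃ₐ[F] E) (hσ : σ ≠ 1) :
    (∀ e : E, e ≠ 0 → ∃ u : E, u ≠ 0 ∧ σ e / e = u ^ 2) ↔
      (((∃ e : E, e ≠ 0 ∧ Algebra.norm F e = -1) ∧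
          ∀ e : E, e ≠ 0 → ∃ ε : Fin 2, ∃ g : F, g ≠ 0 ∧
            Algebra.norm F e = a ^ (ε : ℕ) * g ^ 2) ∨
        ((∃ s : F, s ≠ 0 ∧ -a = s ^ 2) ∧
          ∀ x y : F, ∃ z : F, x ^ 2 + y ^ 2 = z ^ 2)) := by
  have inj : Function.Injective (algebraMap F E) := (algebraMap F E).injective
  have hα0 : α ≠ 0 := by
    intro h0
    apply ha
    apply inj
    rw [map_zero, ← hα, h0]
    ring
  have hσα := TrivAct.sigma_alpha a hns α hα hgen σ hσ
  have nf := TrivAct.norm_formula a hns α hα hgen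
  have hrepr := TrivAct.exists_repr a α hα hgen
  have hσe : ∀ u v : F, σ (algebraMap F E u + algebraMap F E v * α)
      = algebraMap F E u - algebraMap F E v * α := by
    intro u v
    rw [map_add, map_mul, AlgEquiv.commutes, AlgEquiv.commutes, hσα]
    ring
  have prod : ∀ u v : F, (algebraMap F E u + algebraMap F E v * α) *
      (algebraMap F E u - algebraMap F E v * α) = algebraMap F E (u ^ 2 - a * v ^ 2) := by
    intro u v
    rw [map_sub, map_mul, map_pow, map_pow]
    linear_combination (-(algebraMap F E v) ^ 2) * hα
  have hC : (∀ e : E, e ≠ 0 → ∃ u : E, u ≠ 0 ∧ σ e / e = u ^ 2) ↔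
      (∀ e : E, e ≠ 0 → ∃ ε : Fin 2, ∃ g : F, g ≠ 0 ∧
        Algebra.norm F e = a ^ (ε : ℕ) * g ^ 2) := by
    constructor
    · intro H e he
      obtain ⟨w, hw, hdiv⟩ := H e he
      obtain ⟨u, v, rfl⟩ := hrepr e
      have hNne : u ^ 2 - a * v ^ 2 ≠ 0 := by
        intro h0
        obtain ⟨h1, h2⟩ := TrivAct.norm_coords_nz a hns h0
        apply he
        rw [h1, h2]
        simp
      have h1 : σ (algebraMap F E u + algebraMap F E v * α)
          = (algebraMap F E u + algebraMap F E v * α) * w ^ 2 := by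
        rw [div_eq_iff he] at hdiv
        rw [hdiv]
        ring
      have hkey : ((algebraMap F E u + algebraMap F E v * α) * w) ^ 2
          = algebraMap F E (u ^ 2 - a * v ^ 2) := by
        rw [← prod u v, ← hσe u v, h1]
        ring
      obtain ⟨ε, g, hg, hfg⟩ := TrivAct.mem_sq hchar a hns α hα hgen hNne hkey
      exact ⟨ε, g, hg, by rw [nf u v]; exact hfg⟩
    · intro H e he
      obtain ⟨u, v, rfl⟩ := hrepr e
      obtain ⟨ε, g, hg, hN⟩ := H _ he
      rw [nf u v] at hN
      have hσne : σ (algebraMap F E u + algebraMap F E v * α) ≠ 0 := by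
        intro h0
        exact he (σ.injective (by rw [map_zero]; exact h0))
      have hg' : algebraMap F E g ≠ 0 := fun hh => hg (inj (by simpa using hh))
      have hprod := prod u v
      rw [← hσe u v] at hprod
      fin_cases ε
      · norm_num at hN
        refine ⟨σ (algebraMap F E u + algebraMap F E v * α) / algebraMap F E g,
          div_ne_zero hσne hg', ?_⟩
        have hkey : (algebraMap F E u + algebraMap F E v * α) *
            σ (algebraMap F E u + algebraMap F E v * α) = (algebraMap F E g) ^ 2 := by
          rw [hprod, hN, map_pow]
        rw [div_pow, div_eq_div_iff he (pow_ne_zero 2 hg')]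
        linear_combination (-(σ (algebraMap F E u + algebraMap F E v * α))) * hkey
      · norm_num at hN
        refine ⟨σ (algebraMap F E u + algebraMap F E v * α) / (α * algebraMap F E g),
          div_ne_zero hσne (mul_ne_zero hα0 hg'), ?_⟩
        have hkey : (algebraMap F E u + algebraMap F E v * α) *
            σ (algebraMap F E u + algebraMap F E v * α) = (α * algebraMap F E g) ^ 2 := by
          rw [hprod, hN, map_mul, map_pow, mul_pow, hα]
        rw [div_pow, div_eq_div_iff he (pow_ne_zero 2 (mul_ne_zero hα0 hg'))]
        linear_combination (-(σ (algebraMap F E u + algebraMap F E v * α))) * hkey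
  rw [hC]
  constructor
  · intro C
    have hNα : Algebra.norm F α = -a := by
      have h := nf 0 1
      norm_num at h
      exact h
    obtain ⟨ε, g, hg, hag⟩ := C α hα0
    rw [hNα] at hag
    fin_cases ε
    · norm_num at hag
      by_cases hm1 : ∃ e : E, e ≠ 0 ∧ Algebra.norm F e = -1
      · exact Or.inl ⟨hm1, C⟩
      · refine Or.inr ⟨⟨g, hg, hag⟩, ?_⟩
        intro x y
        by_cases hxy : x ^ 2 + y ^ 2 = 0
        · exact ⟨0, by rw [hxy]; ring⟩
        · have hnorm : x ^ 2 - a * (y / g) ^ 2 = x ^ 2 + y ^ 2 := by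
            field_simp
            linear_combination y ^ 2 * hag
          have hene : algebraMap F E x + algebraMap F E (y / g) * α ≠ 0 := by
            intro h0
            obtain ⟨h1, h2⟩ := TrivAct.unique_repr a hns α hα h0
            apply hxy
            have hy0 : y = 0 := by
              field_simp at h2
              simpa using h2
            rw [h1, hy0]
            ring
          obtain ⟨ε', g', hg', hN'⟩ := C _ hene
          rw [nf, hnorm] at hN'
          fin_cases ε'
          · norm_num at hN'
            exact ⟨g', hN'⟩
          · exfalso
            norm_num at hN'
            apply hm1
            refine ⟨algebraMap F E (x / (g * g')) + algebraMap F E (y / (g * g * g')) * α,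
              ?_, ?_⟩
            · intro h0
              obtain ⟨h1, h2⟩ := TrivAct.unique_repr a hns α hα h0
              apply hxy
              have hx0 : x = 0 := by
                field_simp at h1
                simpa using h1
              have hy0 : y = 0 := by
                field_simp at h2
                simpa using h2
              rw [hx0, hy0]
              ring
            · rw [nf]
              have hden : (g ^ 4 * g' ^ 2 : F) ≠ 0 :=
                mul_ne_zero (pow_ne_zero 4 hg) (pow_ne_zero 2 hg')
              have h1 : (x / (g * g')) ^ 2 - a * (y / (g * g * g')) ^ 2
                  = (x ^ 2 * g ^ 2 - a * y ^ 2) / (g ^ 4 * g' ^ 2) := by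
                field_simp
              have h2 : x ^ 2 * g ^ 2 - a * y ^ 2 = -(g ^ 4 * g' ^ 2) := by
                linear_combination g ^ 2 * hN' + (y ^ 2 - g ^ 2 * g' ^ 2) * hag
              rw [h1, h2, neg_div, div_self hden]
    · norm_num at hag
      have hgsq : g ^ 2 = -1 := by
        have h2 : a * g ^ 2 = a * (-1) := by linear_combination -hag
        exact mul_left_cancel₀ ha h2
      left
      refine ⟨⟨algebraMap F E g, fun h0 => hg (inj (by simpa using h0)), ?_⟩, C⟩
      have hng : Algebra.norm F (algebraMap F E g) = g ^ 2 := by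
        have h := nf g 0
        rw [map_zero, zero_mul, add_zero] at h
        rw [h]
        ring
      rw [hng, hgsq]
  · rintro (⟨_, hCC⟩ | ⟨⟨s, hs, hsa⟩, hpy⟩)
    · exact hCC
    · intro e he
      obtain ⟨u, v, rfl⟩ := hrepr e
      rw [nf u v]
      obtain ⟨z, hz⟩ := hpy u (s * v)
      have hzval : u ^ 2 - a * v ^ 2 = z ^ 2 := by
        linear_combination hz + v ^ 2 * hsa
      have hzne : z ≠ 0 := by
        intro h0
        rw [h0] at hzval
        obtain ⟨h1, h2⟩ := TrivAct.norm_coords_nz a hns (u := u) (v := v)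
          (by linear_combination hzval)
        exact he (by rw [h1, h2]; simp)
      exact ⟨0, z, hzne, by simpa using hzval⟩
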